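/- Let M be an n×n real symmetric orthogonal matrix written in block form M = [[C, B],[B^T, D]] where C is m×m symmetric, B is m×k with no zero columns, and D = diag(d_1,...,d_k). Then the columns b_1,...,b_k of B are pairwise orthogonal, k ≤ m, and for each i, C b_i = -d_i b_i. -/
import Mathlib


open Matrix

/-- If the symmetric block matrix `M = [[C, B], [Bᵀ, D]]` (with `C`
symmetric `m × m`, `B` an `m × k` matrix with no zero columns, and `D = diag d`)
is orthogonal, then the columns of `B` are pairwise orthogonal, `k ≤ m`, and each
column `bᵢ` of `B` satisfies `C bᵢ = (-dᵢ) bᵢ`. -/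
theorem stmt_0 {m k : ℕ} (C : Matrix (Fin m) (Fin m) ℝ) (B : Matrix (Fin m) (Fin k) ℝ)
    (d : Fin k → ℝ) (hC : C.IsSymm)
    (hB : ∀ j : Fin k, (fun i => B i j) ≠ (0 : Fin m → ℝ))
    (hM : (Matrix.fromBlocks C B Bᵀ (Matrix.diagonal d)) *
          (Matrix.fromBlocks C B Bᵀ (Matrix.diagonal d)) = 1) :
    (∀ i j : Fin k, i ≠ j → (fun r => B r i) ⬝ᵥ (fun r => B r j) = 0) ∧
    k ≤ m ∧
    (∀ i : Fin k, C.mulVec (fun r => B r i) = (-(d i)) • (fun r => B r i)) := by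
  rw [Matrix.fromBlocks_multiply, ← Matrix.fromBlocks_one] at hM
  have h12 : C * B + B * Matrix.diagonal d = 0 := by
    have h := congrArg Matrix.toBlocks₁₂ hM
    rwa [Matrix.toBlocks_fromBlocks₁₂, Matrix.toBlocks_fromBlocks₁₂] at h
  have h22 : Bᵀ * B + Matrix.diagonal d * Matrix.diagonal d = 1 := by
    have h := congrArg Matrix.toBlocks₂₂ hM
    rwa [Matrix.toBlocks_fromBlocks₂₂, Matrix.toBlocks_fromBlocks₂₂] at h
  have hBtB : Bᵀ * B = Matrix.diagonal (fun i => 1 - d i * d i) := by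
    rw [Matrix.diagonal_mul_diagonal] at h22
    ext a b
    have h := congrFun (congrFun h22 a) b
    by_cases hab : a = b <;>
      simp [Matrix.add_apply, Matrix.diagonal_apply, Matrix.one_apply, hab] at h ⊢ <;> linarith
  have hne : ∀ j : Fin k, 1 - d j * d j ≠ 0 := by
    intro j h0
    have h : (Bᵀ * B) j j = (fun r => B r j) ⬝ᵥ (fun r => B r j) := by
      simp [Matrix.mul_apply, dotProduct, Matrix.transpose_apply]
    rw [hBtB] at h
    simp [Matrix.diagonal_apply, h0] at h
    exact hB j (dotProduct_self_eq_zero.mp h.symm)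
  have horth : ∀ i j : Fin k, i ≠ j → (fun r => B r i) ⬝ᵥ (fun r => B r j) = 0 := by
    intro i j hij
    have h : (Bᵀ * B) i j = (fun r => B r i) ⬝ᵥ (fun r => B r j) := by
      simp [Matrix.mul_apply, dotProduct, Matrix.transpose_apply]
    rw [hBtB] at h
    simpa [Matrix.diagonal_apply, hij] using h.symm
  refine ⟨horth, ?_, ?_⟩
  · have hli : LinearIndependent ℝ (fun j : Fin k => fun r => B r j) := by
      rw [Fintype.linearIndependent_iff]
      intro g hg j
      have hBg : B.mulVec g = 0 := by
        funext r
        have h := congrFun hg r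
        simpa [Matrix.mulVec, dotProduct, mul_comm, Finset.sum_apply] using h
      have h2 : (Bᵀ * B).mulVec g = 0 := by
        rw [← Matrix.mulVec_mulVec, hBg, Matrix.mulVec_zero]
      rw [hBtB] at h2
      have h3 := congrFun h2 j
      simp [Matrix.mulVec_diagonal] at h3
      rcases h3 with h | h
      · exact absurd (by linarith : 1 - d j * d j = 0) (hne j)
      · exact h
    have h := hli.fintype_card_le_finrank (M := Fin m → ℝ)
    simpa using h
  · intro i
    funext r
    have h := congrFun (congrFun h12 r) i
    simp [Matrix.add_apply, Matrix.mul_apply, Matrix.diagonal_apply] at h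
    simp [Matrix.mulVec, dotProduct, Pi.smul_apply, smul_eq_mul]
    linarith [h]
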